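/- Let w be a braid word that begins with σ_1 and contains no occurrence of σ_1^{−1}. Let σ̂ ∈ Aut(F_n) be the image of the braid represented by w under Wada's representation of type (2). Then the reduced word representing σ̂(x_1) in F_n contains at least 2 occurrences of letters x_1^{±1}. -/

import Mathlib

set_option linter.unusedSectionVars false
set_option maxHeartbeats 1000000

namespace Wada2Proof

open FreeGroup

variable {α : Type*} [DecidableEq α]

abbrev Rd (L : List (α × Bool)) : Prop :=
  List.Chain' (fun a b => ¬(a.1 = b.1 ∧ a.2 = !b.2)) L

theorem rd_reduce : ∀ L : List (α × Bool), Rd L → FreeGroup.reduce L = L := by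
  intro L
  induction L with
  | nil => intro _; rfl
  | cons a L ih =>
    intro h
    rw [FreeGroup.reduce.cons, ih h.tail]
    cases L with
    | nil => rfl
    | cons b M =>
      have hc : ¬(a.1 = b.1 ∧ a.2 = !b.2) := (List.isChain_cons_cons.mp h).1
      simp [hc]

theorem rd_reduce_self : ∀ L : List (α × Bool), Rd (FreeGroup.reduce L) := by
  intro L
  induction L with
  | nil => exact List.isChain_nil
  | cons a L ih =>
    rw [FreeGroup.reduce.cons]
    rcases h : FreeGroup.reduce L with _ | ⟨b, M⟩
    · exact List.isChain_singleton a
    · rw [h] at ih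
      by_cases hc : a.1 = b.1 ∧ a.2 = !b.2
      · simp only [hc, and_self, if_true]
        exact ih.tail
      · simp only [hc, if_false]
        exact List.isChain_cons_cons.mpr ⟨hc, ih⟩

theorem rd_toWord (g : FreeGroup α) : Rd (toWord g) := by
  rw [← FreeGroup.reduce_toWord]; exact rd_reduce_self _

theorem toWord_mk_rd {L : List (α × Bool)} (h : Rd L) : (FreeGroup.mk L).toWord = L := by
  rw [FreeGroup.toWord_mk, rd_reduce L h]

theorem mk_single_inv (i : α) (b : Bool) :
    (FreeGroup.mk [(i, b)])⁻¹ = FreeGroup.mk [(i, !b)] := by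
  rw [FreeGroup.inv_mk]; simp [FreeGroup.invRev]

theorem mk_cancel (Y Z : List (α × Bool)) (i : α) (b : Bool) :
    FreeGroup.mk (Y ++ (i, b) :: (i, !b) :: Z) = FreeGroup.mk (Y ++ Z) := by
  rw [← FreeGroup.quot_mk_eq_mk, ← FreeGroup.quot_mk_eq_mk]
  exact Quot.sound (FreeGroup.Red.Step.not)

theorem rd_cons (a : α × Bool) {W : List (α × Bool)} (h : Rd W)
    (hc : ∀ q ∈ W.head?, ¬(a.1 = q.1 ∧ a.2 = !q.2)) : Rd (a :: W) :=
  List.isChain_cons.mpr ⟨hc, h⟩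

section Classify

variable (u t : α)

def Cls (p : α × Bool) (H : List (α × Bool)) : Prop :=
  (p.1 = u → ∃ X, H = (u, p.2) :: (t, !p.2) :: X) ∧
  (p.1 = t → (∃ X, H = (t, p.2) :: X) ∨
    (∃ X, H = (u, p.2) :: X ∧ X.head? ≠ some (t, !p.2))) ∧
  (p.1 ≠ u → p.1 ≠ t → ∃ X, H = p :: X)

theorem classify (φ : FreeGroup α →* FreeGroup α) (hut : u ≠ t)
    (h1 : ∀ e : Bool, φ (FreeGroup.mk [(u,e)]) = FreeGroup.mk [(u,e),(t,!e),(u,e)])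
    (h2 : ∀ e : Bool, φ (FreeGroup.mk [(t,e)]) = FreeGroup.mk [(u,e)])
    (h3 : ∀ j, j ≠ u → j ≠ t → ∀ e : Bool, φ (FreeGroup.mk [(j,e)]) = FreeGroup.mk [(j,e)]) :
    ∀ (M : List (α × Bool)) (p : α × Bool), Rd (p :: M) →
    Cls u t p ((φ (FreeGroup.mk (p :: M))).toWord) := by
  intro M
  induction M with
  | nil =>
    rintro ⟨i, e⟩ _
    by_cases hiu : i = u
    · obtain rfl := hiu.symm
      refine ⟨fun _ => ⟨[(u,e)], ?_⟩, fun h => absurd h hut, fun h _ => absurd rfl h⟩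
      rw [h1 e, toWord_mk_rd]
      refine rd_cons _ (rd_cons _ (List.isChain_singleton _) ?_) ?_ <;>
        · rintro q hq ⟨ha, hb⟩
          simp only [List.head?_cons, Option.mem_def, Option.some.injEq] at hq
          subst hq
          simp_all
    · by_cases hit : i = t
      · obtain rfl := hit.symm
        refine ⟨fun h => absurd h (Ne.symm hut), fun _ => ?_, fun _ h => absurd rfl h⟩
        right
        exact ⟨[], by rw [h2 e]; exact toWord_mk_rd (List.isChain_singleton _), by simp⟩
      · refine ⟨fun h => absurd h hiu, fun h => absurd h hit, fun _ _ => ?_⟩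
        exact ⟨[], by rw [h3 i hiu hit e]; exact toWord_mk_rd (List.isChain_singleton _)⟩
  | cons q M' ih =>
    rintro ⟨i, e⟩ hRd
    rcases q with ⟨j, d⟩
    have hne : ¬(i = j ∧ e = !d) := (List.isChain_cons_cons.mp hRd).1
    have hRdM : Rd ((j,d) :: M') := hRd.tail
    obtain ⟨W, hWmk, hRdW, ihq⟩ : ∃ W, φ (FreeGroup.mk ((j,d) :: M')) = FreeGroup.mk W ∧
        Rd W ∧ Cls u t (j,d) W :=
      ⟨_, FreeGroup.mk_toWord.symm, rd_toWord _, ih (j,d) hRdM⟩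
    have hsplit : ∀ fp : List (α × Bool), φ (FreeGroup.mk [(i,e)]) = FreeGroup.mk fp →
        φ (FreeGroup.mk ((i,e) :: (j,d) :: M')) = FreeGroup.mk (fp ++ W) := by
      intro fp hfp
      have hmm : FreeGroup.mk ((i,e) :: (j,d) :: M')
          = FreeGroup.mk [(i,e)] * FreeGroup.mk ((j,d) :: M') := by
        rw [FreeGroup.mul_mk]; rfl
      rw [hmm, _root_.map_mul, hfp, hWmk, FreeGroup.mul_mk]
    by_cases hiu : i = u
    · -- p = (u, e)
      obtain rfl := hiu.symm
      refine ⟨fun _ => ?_, fun h => absurd h hut, fun h _ => absurd rfl h⟩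
      have hsp := hsplit [(u,e),(t,!e),(u,e)] (h1 e)
      by_cases hju : j = u
      · -- next letter also on u; same sign forced
        obtain rfl := hju.symm
        have hde : d = e := by
          cases d <;> cases e <;> first | rfl | exact absurd ⟨rfl, rfl⟩ hne
        obtain rfl := hde.symm
        obtain ⟨X₀, hX⟩ := ihq.1 rfl
        have hX' : W = (u, e) :: (t, !e) :: X₀ := hX
        refine ⟨(u,e) :: W, ?_⟩
        rw [hsp, toWord_mk_rd]
        · rfl
        rw [hX']
        show Rd ((u,e) :: (t,!e) :: (u,e) :: (u,e) :: (t,!e) :: X₀)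
        have hRdW' : Rd ((u,e) :: (t,!e) :: X₀) := by rw [hX'] at hRdW; exact hRdW
        refine rd_cons _ (rd_cons _ (rd_cons _ hRdW' ?_) ?_) ?_ <;>
          · rintro q hq ⟨ha, hb⟩
            simp only [List.head?_cons, Option.mem_def, Option.some.injEq] at hq
            subst hq
            simp_all
      · by_cases hjt : j = t
        · obtain rfl := hjt.symm
          rcases ihq.2.1 rfl with ⟨X₀, hX⟩ | ⟨X₀, hX, hhd⟩
          · -- W = (t,d) :: X₀, no cancellation
            have hX' : W = (t, d) :: X₀ := hX
            refine ⟨(u,e) :: W, ?_⟩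
            rw [hsp, toWord_mk_rd]
            · rfl
            rw [hX']
            show Rd ((u,e) :: (t,!e) :: (u,e) :: (t,d) :: X₀)
            have hRdW' : Rd ((t,d) :: X₀) := by rw [hX'] at hRdW; exact hRdW
            refine rd_cons _ (rd_cons _ (rd_cons _ hRdW' ?_) ?_) ?_ <;>
              · rintro q hq ⟨ha, hb⟩
                simp only [List.head?_cons, Option.mem_def, Option.some.injEq] at hq
                subst hq
                simp_all
          · -- W = (u,d) :: X₀ with X₀.head? ≠ some (t,!d)
            have hX' : W = (u, d) :: X₀ := hX
            have hhd' : X₀.head? ≠ some (t, !d) := hhd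
            by_cases hde : d = e
            · obtain rfl := hde.symm
              refine ⟨(u,e) :: W, ?_⟩
              rw [hsp, toWord_mk_rd]
              · rfl
              rw [hX']
              show Rd ((u,e) :: (t,!e) :: (u,e) :: (u,e) :: X₀)
              have hRdW' : Rd ((u,e) :: X₀) := by rw [hX'] at hRdW; exact hRdW
              refine rd_cons _ (rd_cons _ (rd_cons _ hRdW' ?_) ?_) ?_ <;>
                · rintro q hq ⟨ha, hb⟩
                  simp only [List.head?_cons, Option.mem_def, Option.some.injEq] at hq
                  subst hq
                  simp_all
            · have hd : d = !e := by
                cases d <;> cases e <;>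
                  first
                    | exact absurd rfl hde
                    | rfl
                    | exact absurd ⟨rfl, rfl⟩ hne
              subst hd
              -- cancellation : fp ++ W = [(u,e),(t,!e)] ++ (u,e)::(u,!e)::X₀
              refine ⟨X₀, ?_⟩
              rw [hsp, hX',
                show [(u,e),(t,!e),(u,e)] ++ (u,!e) :: X₀
                    = [(u,e),(t,!e)] ++ (u,e) :: (u,!e) :: X₀ from rfl,
                mk_cancel,
                show ([(u,e),(t,!e)] ++ X₀ : List (α × Bool))
                    = (u,e) :: (t,!e) :: X₀ from rfl,
                toWord_mk_rd]
              have hRdX : Rd X₀ := by rw [hX'] at hRdW; exact hRdW.tail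
              refine rd_cons _ (rd_cons _ hRdX ?_) ?_
              · rintro q hq ⟨ha, hb⟩
                simp only [Option.mem_def] at hq
                apply hhd'
                rw [hq]
                rcases q with ⟨q1, q2⟩
                simp only at ha hb
                subst ha
                cases q2 <;> cases e <;> simp_all
              · rintro q hq ⟨ha, hb⟩
                simp only [List.head?_cons, Option.mem_def, Option.some.injEq] at hq
                subst hq
                simp_all
        · -- j another letter
          obtain ⟨X₀, hX⟩ := ihq.2.2 hju hjt
          refine ⟨(u,e) :: W, ?_⟩
          rw [hsp, toWord_mk_rd]
          · rfl
          rw [hX]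
          show Rd ((u,e) :: (t,!e) :: (u,e) :: (j,d) :: X₀)
          have hRdW' : Rd ((j,d) :: X₀) := by rw [hX] at hRdW; exact hRdW
          refine rd_cons _ (rd_cons _ (rd_cons _ hRdW' ?_) ?_) ?_ <;>
            · rintro q hq ⟨ha, hb⟩
              simp only [List.head?_cons, Option.mem_def, Option.some.injEq] at hq
              subst hq
              simp_all
    · by_cases hit : i = t
      · -- p = (t, e)
        obtain rfl := hit.symm
        refine ⟨fun h => absurd h (Ne.symm hut), fun _ => ?_, fun _ h => absurd rfl h⟩
        have hsp := hsplit [(u,e)] (h2 e)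
        by_cases hju : j = u
        · obtain rfl := hju.symm
          obtain ⟨X₀, hX⟩ := ihq.1 rfl
          have hX' : W = (u, d) :: (t, !d) :: X₀ := hX
          by_cases hde : d = e
          · obtain rfl := hde.symm
            right
            refine ⟨W, ?_, ?_⟩
            · rw [hsp, toWord_mk_rd]
              · rfl
              rw [hX']
              show Rd ((u,e) :: (u,e) :: (t,!e) :: X₀)
              have hRdW' : Rd ((u,e) :: (t,!e) :: X₀) := by rw [hX'] at hRdW; exact hRdW
              refine rd_cons _ hRdW' ?_
              rintro q hq ⟨ha, hb⟩
              simp only [List.head?_cons, Option.mem_def, Option.some.injEq] at hq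
              subst hq
              simp_all
            · rw [hX']
              simp [hut]
          · have hd : d = !e := by
              cases d <;> cases e <;>
                first
                  | exact absurd rfl hde
                  | rfl
                  | exact absurd ⟨rfl, rfl⟩ hne
            subst hd
            left
            refine ⟨X₀, ?_⟩
            have hstep : FreeGroup.mk ([(u,e)] ++ (u,!e) :: (t,(!(!e))) :: X₀)
                = FreeGroup.mk ((t,(!(!e))) :: X₀) := by
              rw [show [(u,e)] ++ (u,!e) :: (t,(!(!e))) :: X₀
                  = [] ++ (u,e) :: (u,!e) :: ((t,(!(!e))) :: X₀) from rfl, mk_cancel]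
              rfl
            have hX'' : W = (u,!e) :: (t,(!(!e))) :: X₀ := hX'
            rw [hsp, hX'', hstep, toWord_mk_rd, Bool.not_not]
            have hRdW' : Rd ((u,!e) :: (t,(!(!e))) :: X₀) := by rw [hX''] at hRdW; exact hRdW
            exact hRdW'.tail
        · by_cases hjt : j = t
          · obtain rfl := hjt.symm
            have hde : d = e := by
              cases d <;> cases e <;> first | rfl | exact absurd ⟨rfl, rfl⟩ hne
            obtain rfl := hde.symm
            rcases ihq.2.1 rfl with ⟨X₀, hX⟩ | ⟨X₀, hX, hhd⟩
            · have hX' : W = (t, e) :: X₀ := hX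
              right
              refine ⟨W, ?_, ?_⟩
              · rw [hsp, toWord_mk_rd]
                · rfl
                rw [hX']
                show Rd ((u,e) :: (t,e) :: X₀)
                have hRdW' : Rd ((t,e) :: X₀) := by rw [hX'] at hRdW; exact hRdW
                refine rd_cons _ hRdW' ?_
                rintro q hq ⟨ha, hb⟩
                simp only [List.head?_cons, Option.mem_def, Option.some.injEq] at hq
                subst hq
                simp_all
              · rw [hX']
                simp
            · have hX' : W = (u, e) :: X₀ := hX
              right
              refine ⟨W, ?_, ?_⟩
              · rw [hsp, toWord_mk_rd]
                · rfl
                rw [hX']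
                show Rd ((u,e) :: (u,e) :: X₀)
                have hRdW' : Rd ((u,e) :: X₀) := by rw [hX'] at hRdW; exact hRdW
                refine rd_cons _ hRdW' ?_
                rintro q hq ⟨ha, hb⟩
                simp only [List.head?_cons, Option.mem_def, Option.some.injEq] at hq
                subst hq
                simp_all
              · rw [hX']
                simp [hut]
          · obtain ⟨X₀, hX⟩ := ihq.2.2 hju hjt
            right
            refine ⟨W, ?_, ?_⟩
            · rw [hsp, toWord_mk_rd]
              · rfl
              rw [hX]
              show Rd ((u,e) :: (j,d) :: X₀)
              have hRdW' : Rd ((j,d) :: X₀) := by rw [hX] at hRdW; exact hRdW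
              refine rd_cons _ hRdW' ?_
              rintro q hq ⟨ha, hb⟩
              simp only [List.head?_cons, Option.mem_def, Option.some.injEq] at hq
              subst hq
              simp_all
            · rw [hX]
              simp [hjt]
      · -- p = (i, e), i neither u nor t
        refine ⟨fun h => absurd h hiu, fun h => absurd h hit, fun _ _ => ?_⟩
        have hsp := hsplit [(i,e)] (h3 i hiu hit e)
        have hWshape : ∃ (r : α × Bool) (X₀ : List (α × Bool)),
            W = r :: X₀ ∧ ¬(i = r.1 ∧ e = !r.2) := by
          by_cases hju : j = u
          · obtain rfl := hju.symm
            obtain ⟨X₀, hX⟩ := ihq.1 rfl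
            exact ⟨(u,d), (t,!d) :: X₀, hX, by rintro ⟨ha, -⟩; exact hiu ha⟩
          · by_cases hjt : j = t
            · obtain rfl := hjt.symm
              rcases ihq.2.1 rfl with ⟨X₀, hX⟩ | ⟨X₀, hX, -⟩
              · exact ⟨(t,d), X₀, hX, by rintro ⟨ha, -⟩; exact hit ha⟩
              · exact ⟨(u,d), X₀, hX, by rintro ⟨ha, -⟩; exact hiu ha⟩
            · obtain ⟨X₀, hX⟩ := ihq.2.2 hju hjt
              exact ⟨(j,d), X₀, hX, hne⟩
        obtain ⟨r, X₀, hX, hr⟩ := hWshape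
        rcases r with ⟨r1, r2⟩
        refine ⟨W, ?_⟩
        rw [hsp, toWord_mk_rd]
        · rfl
        rw [hX]
        show Rd ((i,e) :: (r1,r2) :: X₀)
        have hRdW' : Rd ((r1,r2) :: X₀) := by rw [hX] at hRdW; exact hRdW
        refine rd_cons _ hRdW' ?_
        rintro q hq hcon
        simp only [List.head?_cons, Option.mem_def, Option.some.injEq] at hq
        subst hq
        exact hr hcon

end Classify


/-! ### Reversal machinery -/

def rv (g : FreeGroup α) : FreeGroup α :=
  (FreeGroup.lift (fun i => MulOpposite.op (FreeGroup.of i)) g).unop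

theorem rv_mul (g h : FreeGroup α) : rv (g * h) = rv h * rv g := by
  simp [rv, map_mul]

theorem rv_of (i : α) : rv (FreeGroup.of i) = FreeGroup.of i := by
  simp [rv]

theorem rv_inv (g : FreeGroup α) : rv g⁻¹ = (rv g)⁻¹ := by
  simp [rv, map_inv]

theorem rv_mk : ∀ L : List (α × Bool), rv (FreeGroup.mk L) = FreeGroup.mk L.reverse := by
  intro L
  induction L with
  | nil =>
    rw [List.reverse_nil, ← FreeGroup.one_eq_mk]; simp [rv]
  | cons p L ih =>
    have h1 : FreeGroup.mk (p :: L) = FreeGroup.mk [p] * FreeGroup.mk L := by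
      rw [FreeGroup.mul_mk]; rfl
    have h2 : rv (FreeGroup.mk [p]) = FreeGroup.mk [p] := by
      rcases p with ⟨i, _ | _⟩
      · show rv ((FreeGroup.of i)⁻¹) = _
        rw [rv_inv, rv_of]; rfl
      · exact rv_of i
    rw [h1, rv_mul, ih, h2, FreeGroup.mul_mk, List.reverse_cons]

theorem rd_reverse {L : List (α × Bool)} (h : Rd L) : Rd L.reverse := by
  show List.IsChain (fun a b => ¬(a.1 = b.1 ∧ a.2 = !b.2)) L.reverse
  rw [List.isChain_reverse]
  refine h.imp ?_
  rintro a b hab ⟨hx, hy⟩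
  exact hab ⟨hx.symm, by cases a.2 <;> cases b.2 <;> simp_all⟩

theorem toWord_rv (g : FreeGroup α) : (rv g).toWord = g.toWord.reverse := by
  conv_lhs => rw [← FreeGroup.mk_toWord (x := g)]
  rw [rv_mk, toWord_mk_rd (rd_reverse (rd_toWord g))]

theorem rv_comm (φ : FreeGroup α →* FreeGroup α)
    (hpal : ∀ i : α, rv (φ (FreeGroup.of i)) = φ (FreeGroup.of i)) (g : FreeGroup α) :
    rv (φ g) = φ (rv g) := by
  have key : ∀ h : FreeGroup α,
      FreeGroup.lift (fun i => MulOpposite.op (FreeGroup.of i)) (φ h)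
        = (MonoidHom.op φ) (FreeGroup.lift (fun i => MulOpposite.op (FreeGroup.of i)) h) := by
    intro h
    have := FreeGroup.ext_hom
      ((FreeGroup.lift (fun i => MulOpposite.op (FreeGroup.of i))).comp φ)
      ((MonoidHom.op φ).comp (FreeGroup.lift (fun i => MulOpposite.op (FreeGroup.of i))))
      (by
        intro a
        simp only [MonoidHom.comp_apply, FreeGroup.lift_apply_of]
        have h2 := hpal a
        unfold rv at h2
        have h3 : FreeGroup.lift (fun i => MulOpposite.op (FreeGroup.of i)) (φ (FreeGroup.of a))
            = MulOpposite.op (φ (FreeGroup.of a)) := by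
          rw [← MulOpposite.op_unop
            (FreeGroup.lift (fun i => MulOpposite.op (FreeGroup.of i)) (φ (FreeGroup.of a))), h2]
        rw [h3]
        rfl)
    exact DFunLike.congr_fun this h
  unfold rv
  rw [key g]
  rfl

/-! ### Preservation of the Good property -/

theorem head_pres (u t z : α) (φ : FreeGroup α →* FreeGroup α) (hut : u ≠ t) (htz : t ≠ z)
    (h1 : ∀ e : Bool, φ (FreeGroup.mk [(u,e)]) = FreeGroup.mk [(u,e),(t,!e),(u,e)])
    (h2 : ∀ e : Bool, φ (FreeGroup.mk [(t,e)]) = FreeGroup.mk [(u,e)])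
    (h3 : ∀ j, j ≠ u → j ≠ t → ∀ e : Bool, φ (FreeGroup.mk [(j,e)]) = FreeGroup.mk [(j,e)])
    (g : FreeGroup α) (hg : (FreeGroup.toWord g).head? = some (z, true)) :
    (FreeGroup.toWord (φ g)).head? = some (z, true) := by
  rcases hL : FreeGroup.toWord g with _ | ⟨p, M⟩
  · rw [hL] at hg; exact absurd hg (by simp)
  · rw [hL] at hg
    simp only [List.head?_cons, Option.some.injEq] at hg
    subst hg
    have hRd : Rd ((z, true) :: M) := by rw [← hL]; exact rd_toWord g
    have hcls := classify u t φ hut h1 h2 h3 M (z, true) hRd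
    have hφg : φ g = φ (FreeGroup.mk ((z, true) :: M)) := by rw [← hL, FreeGroup.mk_toWord]
    rw [hφg]
    by_cases hzu : z = u
    · obtain rfl := hzu.symm
      obtain ⟨X, hXe⟩ := hcls.1 rfl
      rw [hXe]; rfl
    · obtain ⟨X, hXe⟩ := hcls.2.2 hzu (fun h => htz h.symm)
      rw [hXe]; rfl

theorem pal_of_forms (u t : α) (φ : FreeGroup α →* FreeGroup α)
    (h1 : ∀ e : Bool, φ (FreeGroup.mk [(u,e)]) = FreeGroup.mk [(u,e),(t,!e),(u,e)])
    (h2 : ∀ e : Bool, φ (FreeGroup.mk [(t,e)]) = FreeGroup.mk [(u,e)])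
    (h3 : ∀ j, j ≠ u → j ≠ t → ∀ e : Bool, φ (FreeGroup.mk [(j,e)]) = FreeGroup.mk [(j,e)]) :
    ∀ i : α, rv (φ (FreeGroup.of i)) = φ (FreeGroup.of i) := by
  intro i
  have hof : (FreeGroup.of i : FreeGroup α) = FreeGroup.mk [(i, true)] := rfl
  by_cases hiu : i = u
  · obtain rfl := hiu.symm
    rw [hof, h1 true, rv_mk]
    rfl
  · by_cases hit : i = t
    · obtain rfl := hit.symm
      rw [hof, h2 true, rv_mk]
      rfl
    · rw [hof, h3 i hiu hit true, rv_mk]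
      rfl

theorem good_pres (u t z : α) (φ : FreeGroup α →* FreeGroup α) (hut : u ≠ t) (htz : t ≠ z)
    (h1 : ∀ e : Bool, φ (FreeGroup.mk [(u,e)]) = FreeGroup.mk [(u,e),(t,!e),(u,e)])
    (h2 : ∀ e : Bool, φ (FreeGroup.mk [(t,e)]) = FreeGroup.mk [(u,e)])
    (h3 : ∀ j, j ≠ u → j ≠ t → ∀ e : Bool, φ (FreeGroup.mk [(j,e)]) = FreeGroup.mk [(j,e)])
    (g : FreeGroup α) (hg1 : (FreeGroup.toWord g).head? = some (z, true))
    (hg2 : (FreeGroup.toWord g).getLast? = some (z, true)) :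
    (FreeGroup.toWord (φ g)).head? = some (z, true) ∧
      (FreeGroup.toWord (φ g)).getLast? = some (z, true) := by
  refine ⟨head_pres u t z φ hut htz h1 h2 h3 g hg1, ?_⟩
  have hrv : (FreeGroup.toWord (rv g)).head? = some (z, true) := by
    rw [toWord_rv, List.head?_reverse]
    exact hg2
  have h := head_pres u t z φ hut htz h1 h2 h3 (rv g) hrv
  rw [← rv_comm φ (pal_of_forms u t φ h1 h2 h3) g, toWord_rv, List.head?_reverse] at h
  exact h

/-! ### converting `of`-form identities to `mk`-form -/

theorem mk_form1 (u t : α) (φ : FreeGroup α →* FreeGroup α)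
    (h : φ (FreeGroup.of u) = FreeGroup.of u * (FreeGroup.of t)⁻¹ * FreeGroup.of u) :
    ∀ e : Bool, φ (FreeGroup.mk [(u,e)]) = FreeGroup.mk [(u,e),(t,!e),(u,e)] := by
  have ht : (FreeGroup.of t : FreeGroup α) = FreeGroup.mk [(t, true)] := rfl
  have hu : (FreeGroup.of u : FreeGroup α) = FreeGroup.mk [(u, true)] := rfl
  intro e
  cases e
  · rw [show (FreeGroup.mk [(u,false)] : FreeGroup α) = (FreeGroup.of u)⁻¹ from
      (mk_single_inv u true).symm, _root_.map_inv, h, ht, hu, mk_single_inv,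
      FreeGroup.mul_mk, FreeGroup.mul_mk, FreeGroup.inv_mk]
    simp [FreeGroup.invRev]
  · rw [show (FreeGroup.mk [(u,true)] : FreeGroup α) = FreeGroup.of u from rfl, h, ht, hu,
      mk_single_inv, FreeGroup.mul_mk, FreeGroup.mul_mk]
    rfl

theorem mk_form2 (u t : α) (φ : FreeGroup α →* FreeGroup α)
    (h : φ (FreeGroup.of t) = FreeGroup.of u) :
    ∀ e : Bool, φ (FreeGroup.mk [(t,e)]) = FreeGroup.mk [(u,e)] := by
  intro e
  cases e
  · rw [show (FreeGroup.mk [(t,false)] : FreeGroup α) = (FreeGroup.of t)⁻¹ from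
      (mk_single_inv t true).symm, _root_.map_inv, h]
    exact mk_single_inv u true
  · exact h

theorem mk_form3 (u t : α) (φ : FreeGroup α →* FreeGroup α)
    (j : α) (h : φ (FreeGroup.of j) = FreeGroup.of j) :
    ∀ e : Bool, φ (FreeGroup.mk [(j,e)]) = FreeGroup.mk [(j,e)] := by
  intro e
  cases e
  · rw [show (FreeGroup.mk [(j,false)] : FreeGroup α) = (FreeGroup.of j)⁻¹ from
      (mk_single_inv j true).symm, _root_.map_inv, h]
  · exact h

end Wada2Proof

/-- The defining relations of the braid group on `m + 1` strands (`m` generators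
`σ_1, …, σ_m`, indexed here by `Fin m`): the commutation relations
`σ_i σ_j = σ_j σ_i` for `|i - j| > 1` and the braid relations
`σ_i σ_{i+1} σ_i = σ_{i+1} σ_i σ_{i+1}`. -/
def braidRels (m : ℕ) : Set (FreeGroup (Fin m)) :=
  {r | (∃ i j : Fin m, (i : ℕ) + 1 < (j : ℕ) ∧
        r = FreeGroup.of i * FreeGroup.of j * (FreeGroup.of i)⁻¹ * (FreeGroup.of j)⁻¹) ∨
       (∃ i j : Fin m, (i : ℕ) + 1 = (j : ℕ) ∧
        r = FreeGroup.of i * FreeGroup.of j * FreeGroup.of i *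
            (FreeGroup.of j * FreeGroup.of i * FreeGroup.of j)⁻¹)}

/-- The index in `Fin n` of the generator `x_i` of `F_n` acted on by `σ_i`
(the strand index `i`, `0`-based). -/
def xL (n : ℕ) (i : Fin (n - 1)) : Fin n := ⟨i, by have := i.isLt; omega⟩

/-- The index in `Fin n` of the generator `x_{i+1}` of `F_n` acted on by `σ_i`. -/
def xR (n : ℕ) (i : Fin (n - 1)) : Fin n := ⟨(i : ℕ) + 1, by have := i.isLt; omega⟩
/-- If `w` is a braid word beginning with `σ_1` and containing no occurrence of
`σ_1⁻¹`, and `σ̂` is the image of the braid represented by `w` under Wada's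
representation of type (2) (`σ_i ↦ (x_i ↦ x_i x_{i+1}⁻¹ x_i, x_{i+1} ↦ x_i)`), then
the reduced word of `σ̂(x_1)` contains at least 2 occurrences of letters `x_1^{±1}`. -/
theorem wada_type2_sigma1_positive_two_occurrences (n : ℕ) (hn : 2 ≤ n)
    (ψ : PresentedGroup (braidRels (n - 1)) →* MulAut (FreeGroup (Fin n)))
    (hψ : ∀ i : Fin (n - 1),
      (ψ (PresentedGroup.of i)) (FreeGroup.of (xL n i)) =
          FreeGroup.of (xL n i) * (FreeGroup.of (xR n i))⁻¹ * FreeGroup.of (xL n i) ∧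
      (ψ (PresentedGroup.of i)) (FreeGroup.of (xR n i)) = FreeGroup.of (xL n i) ∧
      ∀ j : Fin n, j ≠ xL n i → j ≠ xR n i →
        (ψ (PresentedGroup.of i)) (FreeGroup.of j) = FreeGroup.of j)
    (w : List (Fin (n - 1) × Bool))
    (hhead : w.head? = some ((⟨0, by omega⟩ : Fin (n - 1)), true))
    (hnonneg : ∀ p ∈ w, p ≠ ((⟨0, by omega⟩ : Fin (n - 1)), false)) :
    2 ≤ ((ψ (PresentedGroup.mk (braidRels (n - 1)) (FreeGroup.mk w)))
          (FreeGroup.of (⟨0, by omega⟩ : Fin n))).toWord.countP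
            (fun p => decide (p.1 = (⟨0, by omega⟩ : Fin n))) := by
  classical
  open Wada2Proof in
  set g0 : Fin (n - 1) := ⟨0, by omega⟩ with hg0
  set x0 : Fin n := ⟨0, by omega⟩ with hx0
  set x1 : Fin n := ⟨1, by omega⟩ with hx1
  set A : FreeGroup (Fin (n - 1)) →* MulAut (FreeGroup (Fin n)) :=
    ψ.comp (PresentedGroup.mk (braidRels (n - 1))) with hA
  -- decompose A on cons
  have hconsA : ∀ (p : Fin (n - 1) × Bool) (l : List (Fin (n - 1) × Bool)),
      A (FreeGroup.mk (p :: l)) = A (FreeGroup.mk [p]) * A (FreeGroup.mk l) := by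
    intro p l
    rw [← _root_.map_mul, FreeGroup.mul_mk]
    rfl
  have hAtrue : ∀ i : Fin (n - 1), A (FreeGroup.mk [(i, true)]) = ψ (PresentedGroup.of i) :=
    fun i => rfl
  have hAfalse : ∀ i : Fin (n - 1),
      A (FreeGroup.mk [(i, false)]) = (ψ (PresentedGroup.of i))⁻¹ := by
    intro i
    have : (FreeGroup.mk [(i, false)] : FreeGroup (Fin (n-1)))
        = (FreeGroup.mk [(i, true)])⁻¹ := (Wada2Proof.mk_single_inv i true).symm
    rw [this, _root_.map_inv, hAtrue]
  -- all allowed single-letter automorphisms preserve goodness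
  have hgood_step : ∀ (p : Fin (n - 1) × Bool), p ≠ (g0, false) →
      ∀ g : FreeGroup (Fin n),
      (FreeGroup.toWord g).head? = some (x0, true) →
      (FreeGroup.toWord g).getLast? = some (x0, true) →
      (FreeGroup.toWord ((A (FreeGroup.mk [p])) g)).head? = some (x0, true) ∧
      (FreeGroup.toWord ((A (FreeGroup.mk [p])) g)).getLast? = some (x0, true) := by
    rintro ⟨i, s⟩ hp g hg1 hg2
    cases s
    · -- negative letter : i ≠ g0
      have hig0 : i ≠ g0 := fun h => hp (by rw [h])
      have hvne : (i : ℕ) ≠ 0 := by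
        intro h
        exact hig0 (Fin.ext h)
      set E := ψ (PresentedGroup.of i) with hE
      have hspec := hψ i
      have e1 : E⁻¹ (FreeGroup.of (xR n i)) =
          FreeGroup.of (xR n i) * (FreeGroup.of (xL n i))⁻¹ * FreeGroup.of (xR n i) := by
        rw [MulAut.inv_def, MulEquiv.symm_apply_eq]
        rw [_root_.map_mul, _root_.map_mul, _root_.map_inv, hspec.1, hspec.2.1]
        group
      have e2 : E⁻¹ (FreeGroup.of (xL n i)) = FreeGroup.of (xR n i) := by
        rw [MulAut.inv_def, MulEquiv.symm_apply_eq, hspec.2.1]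
      have e3 : ∀ j : Fin n, j ≠ xR n i → j ≠ xL n i →
          E⁻¹ (FreeGroup.of j) = FreeGroup.of j := by
        intro j hj1 hj2
        rw [MulAut.inv_def, MulEquiv.symm_apply_eq, hspec.2.2 j hj2 hj1]
      have hut : xR n i ≠ xL n i := by
        intro h
        have := congrArg Fin.val h
        simp [xL, xR] at this
      have htz : xL n i ≠ x0 := by
        intro h
        have := congrArg Fin.val h
        simp [xL, hx0] at this
        exact hvne this
      have hAp : A (FreeGroup.mk [(i, false)]) = E⁻¹ := hAfalse i
      rw [hAp]
      exact Wada2Proof.good_pres (xR n i) (xL n i) x0 (E⁻¹ : MulAut _).toMonoidHom hut htz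
        (Wada2Proof.mk_form1 (xR n i) (xL n i) (E⁻¹ : MulAut _).toMonoidHom e1)
        (Wada2Proof.mk_form2 (xR n i) (xL n i) (E⁻¹ : MulAut _).toMonoidHom e2)
        (fun j hj1 hj2 => Wada2Proof.mk_form3 (xR n i) (xL n i) (E⁻¹ : MulAut _).toMonoidHom j
          (e3 j hj1 hj2)) g hg1 hg2
    · -- positive letter
      set E := ψ (PresentedGroup.of i) with hE
      have hspec := hψ i
      have hut : xL n i ≠ xR n i := by
        intro h
        have := congrArg Fin.val h
        simp [xL, xR] at this
      have htz : xR n i ≠ x0 := by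
        intro h
        have := congrArg Fin.val h
        simp [xR, hx0] at this
      have hAp : A (FreeGroup.mk [(i, true)]) = E := hAtrue i
      rw [hAp]
      exact Wada2Proof.good_pres (xL n i) (xR n i) x0 (E : MulAut _).toMonoidHom hut htz
        (Wada2Proof.mk_form1 (xL n i) (xR n i) (E : MulAut _).toMonoidHom hspec.1)
        (Wada2Proof.mk_form2 (xL n i) (xR n i) (E : MulAut _).toMonoidHom hspec.2.1)
        (fun j hj1 hj2 => Wada2Proof.mk_form3 (xL n i) (xR n i) (E : MulAut _).toMonoidHom j
          (hspec.2.2 j hj1 hj2)) g hg1 hg2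
  -- main induction over braid words
  have hGoodAll : ∀ l : List (Fin (n - 1) × Bool), (∀ p ∈ l, p ≠ (g0, false)) →
      (FreeGroup.toWord ((A (FreeGroup.mk l)) (FreeGroup.of x0))).head? = some (x0, true) ∧
      (FreeGroup.toWord ((A (FreeGroup.mk l)) (FreeGroup.of x0))).getLast? = some (x0, true) := by
    intro l
    induction l with
    | nil =>
      intro _
      have h1 : (FreeGroup.mk ([] : List (Fin (n-1) × Bool))) = 1 := FreeGroup.one_eq_mk.symm
      rw [h1, _root_.map_one, MulAut.one_apply, FreeGroup.toWord_of]
      exact ⟨rfl, rfl⟩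
    | cons p l ih =>
      intro hall
      have htail := ih (fun q hq => hall q (List.mem_cons_of_mem p hq))
      have hp : p ≠ (g0, false) := hall p List.mem_cons_self
      rw [hconsA, MulAut.mul_apply]
      exact hgood_step p hp _ htail.1 htail.2
  -- peel off the leading σ₁
  obtain ⟨w', rfl⟩ : ∃ w', w = (g0, true) :: w' := by
    cases w with
    | nil => simp at hhead
    | cons a w' =>
      simp only [List.head?_cons, Option.some.injEq] at hhead
      exact ⟨w', by rw [hhead]⟩
  have hGood' := hGoodAll w' (fun q hq => hnonneg q (List.mem_cons_of_mem _ hq))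
  set g' := (A (FreeGroup.mk w')) (FreeGroup.of x0) with hg'
  set E0 := ψ (PresentedGroup.of g0) with hE0
  have hspec0 := hψ g0
  have hxLg0 : xL n g0 = x0 := rfl
  have hxRg0 : xR n g0 = x1 := rfl
  have hut0 : x0 ≠ x1 := by
    intro h
    have := congrArg Fin.val h
    simp [hx0, hx1] at this
  -- the element in question
  have hmain : (ψ (PresentedGroup.mk (braidRels (n - 1)) (FreeGroup.mk ((g0, true) :: w'))))
      (FreeGroup.of x0) = E0 g' := by
    show (A (FreeGroup.mk ((g0, true) :: w'))) (FreeGroup.of x0) = E0 g'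
    rw [hconsA, MulAut.mul_apply, hAtrue]
  -- head classification for the final application
  obtain ⟨M, hM⟩ : ∃ M, FreeGroup.toWord g' = (x0, true) :: M := by
    rcases hL : FreeGroup.toWord g' with _ | ⟨p, M⟩
    · rw [hL] at hGood'
      exact absurd hGood'.1 (by simp)
    · rw [hL] at hGood'
      have := hGood'.1
      simp only [List.head?_cons, Option.some.injEq] at this
      exact ⟨M, by rw [this]⟩
  have hRdM : Wada2Proof.Rd ((x0, true) :: M) := by
    rw [← hM]; exact Wada2Proof.rd_toWord g'
  have h1mk : ∀ e : Bool, (E0 : MulAut _).toMonoidHom (FreeGroup.mk [(x0,e)])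
      = FreeGroup.mk [(x0,e),(x1,!e),(x0,e)] :=
    Wada2Proof.mk_form1 x0 x1 (E0 : MulAut _).toMonoidHom
      (by rw [← hxLg0, ← hxRg0]; exact hspec0.1)
  have h2mk : ∀ e : Bool, (E0 : MulAut _).toMonoidHom (FreeGroup.mk [(x1,e)])
      = FreeGroup.mk [(x0,e)] :=
    Wada2Proof.mk_form2 x0 x1 (E0 : MulAut _).toMonoidHom
      (by rw [← hxLg0, ← hxRg0]; exact hspec0.2.1)
  have h3mk : ∀ j, j ≠ x0 → j ≠ x1 → ∀ e : Bool,
      (E0 : MulAut _).toMonoidHom (FreeGroup.mk [(j,e)]) = FreeGroup.mk [(j,e)] :=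
    fun j hj1 hj2 => Wada2Proof.mk_form3 x0 x1 (E0 : MulAut _).toMonoidHom j
      (by rw [← hxLg0] at hj1; rw [← hxRg0] at hj2; exact hspec0.2.2 j hj1 hj2)
  have hcls := Wada2Proof.classify x0 x1 (E0 : MulAut _).toMonoidHom hut0 h1mk h2mk h3mk
    M (x0, true) hRdM
  obtain ⟨X, hXe⟩ := hcls.1 rfl
  have hEg' : E0 g' = (E0 : MulAut _).toMonoidHom (FreeGroup.mk ((x0, true) :: M)) := by
    rw [← hM, FreeGroup.mk_toWord]
    rfl
  have hWordZ : (FreeGroup.toWord (E0 g')) = (x0, true) :: (x1, false) :: X := by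
    rw [hEg', hXe]
    rfl
  -- last letter of the final word
  have hlastZ : (FreeGroup.toWord (E0 g')).getLast? = some (x0, true) := by
    have := Wada2Proof.good_pres x0 x1 x0 (E0 : MulAut _).toMonoidHom hut0
      (fun h => hut0 h.symm) h1mk h2mk h3mk g' hGood'.1 hGood'.2
    exact this.2
  -- now count
  rw [hmain, hWordZ]
  rw [hWordZ] at hlastZ
  rcases X with _ | ⟨c, X'⟩
  · exfalso
    simp only [List.getLast?_cons_cons, List.getLast?_singleton, Option.some.injEq] at hlastZ
    have := congrArg (fun q => (Prod.fst q : Fin n).val) hlastZ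
    simp [hx0, hx1] at this
  · have hlX : ((c :: X').getLast? : Option (Fin n × Bool)) = some (x0, true) := by
      rw [List.getLast?_cons_cons, List.getLast?_cons_cons] at hlastZ
      exact hlastZ
    have hmem : (x0, true) ∈ c :: X' := by
      obtain ⟨hne, heq⟩ := List.mem_getLast?_eq_getLast (by rw [Option.mem_def]; exact hlX)
      rw [heq]
      exact List.getLast_mem hne
    have hcnt : 0 < (c :: X').countP (fun p => decide (p.1 = x0)) := by
      rw [List.countP_pos_iff]
      exact ⟨(x0, true), hmem, by simp⟩
    rw [List.countP_cons, List.countP_cons]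
    have hx1ne : ¬(((x1, false) : Fin n × Bool).1 = x0) := fun h => hut0 (h.symm)
    simp only [decide_eq_true_eq]
    rw [if_neg hx1ne]
    simp only [if_true]
    omega
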